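/- The map δ ↦ σ·(e^b - e^{b-δ})/((e^b - 1)·ϕ(Φ⁻¹((e^{b-δ}-1)/(e^b-1)))) is strictly increasing on (δ_th, b), where δ_th = b - log((e^b + 1)/2); consequently G'(δ) = φ(δ)·[1 - this quantity] changes sign at most once on (δ_th, b). -/

import Mathlib

open Real Set

/-- Standard normal density. -/
noncomputable def stdPdf (x : ℝ) : ℝ := (Real.sqrt (2 * Real.pi))⁻¹ * Real.exp (-x ^ 2 / 2)

/-- Standard normal CDF. -/
noncomputable def stdCdf (x : ℝ) : ℝ := ∫ t in Set.Iic x, stdPdf t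

/-- Inverse of the standard normal CDF. -/
noncomputable def stdCdfInv : ℝ → ℝ := Function.invFun stdCdf

section Aux
open MeasureTheory Filter

lemma stdPdf_eq (x : ℝ) : stdPdf x = (Real.sqrt (2 * Real.pi))⁻¹ * Real.exp (-(1/2) * x ^ 2) := by
  unfold stdPdf; ring_nf

lemma sqrt2pi_pos : 0 < Real.sqrt (2 * Real.pi) :=
  Real.sqrt_pos.mpr (by positivity)

lemma stdPdf_pos (x : ℝ) : 0 < stdPdf x :=
  mul_pos (inv_pos.mpr sqrt2pi_pos) (Real.exp_pos _)

lemma integrable_stdPdf : Integrable stdPdf := by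
  have h : Integrable (fun x : ℝ => Real.exp (-(1/2) * x ^ 2)) :=
    integrable_exp_neg_mul_sq (by norm_num)
  exact (h.const_mul (Real.sqrt (2 * Real.pi))⁻¹).congr
    (Filter.Eventually.of_forall fun x => (stdPdf_eq x).symm)

lemma integral_stdPdf : ∫ x, stdPdf x = 1 := by
  have h : ∫ x : ℝ, Real.exp (-(1/2) * x ^ 2) = Real.sqrt (Real.pi / (1/2)) :=
    integral_gaussian (1/2)
  have h2 : ∫ x, stdPdf x = (Real.sqrt (2 * Real.pi))⁻¹ * ∫ x : ℝ, Real.exp (-(1/2) * x ^ 2) := by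
    rw [← MeasureTheory.integral_const_mul]
    exact integral_congr_ae (Filter.Eventually.of_forall fun x => stdPdf_eq x)
  rw [h2, h]
  rw [show Real.pi / (1/2) = 2 * Real.pi by ring]
  exact inv_mul_cancel₀ (ne_of_gt sqrt2pi_pos)


lemma stdCdf_sub (a c : ℝ) : stdCdf c - stdCdf a = ∫ t in a..c, stdPdf t :=
  intervalIntegral.integral_Iic_sub_Iic integrable_stdPdf.integrableOn integrable_stdPdf.integrableOn

lemma stdCdf_strictMono : StrictMono stdCdf := by
  intro a c hac
  have h := stdCdf_sub a c
  have hpos : 0 < ∫ t in a..c, stdPdf t :=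
    intervalIntegral.intervalIntegral_pos_of_pos integrable_stdPdf.intervalIntegrable stdPdf_pos hac
  linarith

lemma stdCdf_continuous : Continuous stdCdf := by
  have h : Continuous (fun x => ∫ t in (0:ℝ)..x, stdPdf t) :=
    intervalIntegral.continuous_primitive (fun a b => integrable_stdPdf.intervalIntegrable) 0
  have he : stdCdf = fun x => stdCdf 0 + ∫ t in (0:ℝ)..x, stdPdf t := by
    funext x
    rw [← stdCdf_sub 0 x]; ring
  rw [he]
  exact continuous_const.add h

lemma stdCdf_tendsto_atBot : Tendsto stdCdf atBot (nhds 0) := by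
  have h := MeasureTheory.tendsto_integral_filter_of_dominated_convergence (μ := volume)
    (l := atBot) (F := fun x t => Set.indicator (Iic x) stdPdf t) (f := fun _ => (0:ℝ))
    stdPdf
    (Filter.Eventually.of_forall fun n =>
      (integrable_stdPdf.aestronglyMeasurable).indicator measurableSet_Iic)
    (Filter.Eventually.of_forall fun n => Filter.Eventually.of_forall fun t => by
      show ‖Set.indicator (Iic n) stdPdf t‖ ≤ stdPdf t
      by_cases ht : t ∈ Iic n
      · rw [Set.indicator_of_mem ht]
        exact le_of_eq (abs_of_pos (stdPdf_pos t))
      · rw [Set.indicator_of_notMem ht]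
        simp [le_of_lt (stdPdf_pos t)])
    integrable_stdPdf
    (Filter.Eventually.of_forall fun t => by
      have : ∀ᶠ x in atBot, Set.indicator (Iic x) stdPdf t = 0 := by
        filter_upwards [eventually_lt_atBot t] with x hx
        exact Set.indicator_of_notMem (by simpa using hx.not_ge) _
      exact Filter.Tendsto.congr' (Filter.EventuallyEq.symm this) tendsto_const_nhds)
  show Tendsto (fun x => ∫ t in Iic x, stdPdf t) _ _
  simpa [stdCdf, MeasureTheory.integral_indicator measurableSet_Iic] using h

lemma stdCdf_tendsto_atTop : Tendsto stdCdf atTop (nhds 1) := by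
  have h := MeasureTheory.tendsto_integral_filter_of_dominated_convergence (μ := volume)
    (l := atTop) (F := fun x t => Set.indicator (Iic x) stdPdf t) (f := stdPdf)
    stdPdf
    (Filter.Eventually.of_forall fun n =>
      (integrable_stdPdf.aestronglyMeasurable).indicator measurableSet_Iic)
    (Filter.Eventually.of_forall fun n => Filter.Eventually.of_forall fun t => by
      show ‖Set.indicator (Iic n) stdPdf t‖ ≤ stdPdf t
      by_cases ht : t ∈ Iic n
      · rw [Set.indicator_of_mem ht]
        exact le_of_eq (abs_of_pos (stdPdf_pos t))
      · rw [Set.indicator_of_notMem ht]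
        simp [le_of_lt (stdPdf_pos t)])
    integrable_stdPdf
    (Filter.Eventually.of_forall fun t => by
      have : ∀ᶠ x in atTop, Set.indicator (Iic x) stdPdf t = stdPdf t := by
        filter_upwards [eventually_ge_atTop t] with x hx
        exact Set.indicator_of_mem (mem_Iic.mpr hx) _
      exact Filter.Tendsto.congr' (Filter.EventuallyEq.symm this) tendsto_const_nhds)
  rw [← integral_stdPdf]
  show Tendsto (fun x => ∫ t in Iic x, stdPdf t) _ _
  simpa [stdCdf, MeasureTheory.integral_indicator measurableSet_Iic] using h

lemma stdPdf_neg_arg (x : ℝ) : stdPdf (-x) = stdPdf x := by simp [stdPdf]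

lemma stdCdf_zero : stdCdf 0 = 1/2 := by
  have h1 : (∫ x in Iic (0:ℝ), stdPdf (-x)) = ∫ x in Ioi (-(0:ℝ)), stdPdf x :=
    integral_comp_neg_Iic 0 stdPdf
  simp only [stdPdf_neg_arg, neg_zero] at h1
  have h2 : (∫ x in Iic (0:ℝ), stdPdf x) + ∫ x in Ioi (0:ℝ), stdPdf x = ∫ x, stdPdf x :=
    intervalIntegral.integral_Iic_add_Ioi integrable_stdPdf.integrableOn integrable_stdPdf.integrableOn
  rw [integral_stdPdf, ← h1] at h2
  unfold stdCdf
  linarith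

lemma stdCdf_surj {p : ℝ} (h0 : 0 < p) (h1 : p < 1) : ∃ x, stdCdf x = p := by
  obtain ⟨a, ha⟩ := (stdCdf_tendsto_atBot.eventually_lt_const h0).exists
  obtain ⟨c, hc⟩ := (stdCdf_tendsto_atTop.eventually_const_lt h1).exists
  have hac : a ≤ c := by
    by_contra h
    exact absurd (stdCdf_strictMono (lt_of_not_ge h)) (by linarith)
  obtain ⟨x, _, hx⟩ := intermediate_value_Icc hac stdCdf_continuous.continuousOn
    ⟨ha.le, hc.le⟩
  exact ⟨x, hx⟩


lemma stdCdf_stdCdfInv {p : ℝ} (h0 : 0 < p) (h1 : p < 1) : stdCdf (stdCdfInv p) = p :=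
  Function.invFun_eq (stdCdf_surj h0 h1)

lemma stdCdfInv_neg {p : ℝ} (h0 : 0 < p) (h1 : p < 1/2) : stdCdfInv p < 0 := by
  have h := stdCdf_stdCdfInv h0 (by linarith)
  have : stdCdf (stdCdfInv p) < stdCdf 0 := by rw [h, stdCdf_zero]; linarith
  exact stdCdf_strictMono.lt_iff_lt.mp this

lemma stdCdfInv_lt {p q : ℝ} (h0 : 0 < p) (hpq : p < q) (h1 : q < 1) :
    stdCdfInv p < stdCdfInv q := by
  have hp := stdCdf_stdCdfInv h0 (by linarith)
  have hq := stdCdf_stdCdfInv (by linarith : (0:ℝ) < q) h1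
  apply stdCdf_strictMono.lt_iff_lt.mp
  rw [hp, hq]; exact hpq

lemma stdPdf_lt_of_neg {x y : ℝ} (h : x < y) (hy : y ≤ 0) : stdPdf x < stdPdf y := by
  unfold stdPdf
  apply mul_lt_mul_of_pos_left _ (inv_pos.mpr sqrt2pi_pos)
  apply Real.exp_lt_exp.mpr
  nlinarith

lemma one_lt_exp_of_pos {b : ℝ} (hb : 0 < b) : 1 < Real.exp b := by
  have := Real.exp_lt_exp.mpr hb
  rwa [Real.exp_zero] at this

lemma interval_facts {b δ : ℝ} (hb : 0 < b)
    (hδ : δ ∈ Set.Ioo (b - Real.log ((Real.exp b + 1) / 2)) b) :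
    0 < (Real.exp (b - δ) - 1) / (Real.exp b - 1) ∧
    (Real.exp (b - δ) - 1) / (Real.exp b - 1) < 1/2 ∧ 0 < δ := by
  obtain ⟨hδ1, hδ2⟩ := hδ
  have he : 1 < Real.exp b := one_lt_exp_of_pos hb
  have hC : 0 < Real.exp b - 1 := by linarith
  have hM : (0:ℝ) < (Real.exp b + 1) / 2 := by linarith
  have hM1 : (1:ℝ) < (Real.exp b + 1) / 2 := by linarith
  have hMb : (Real.exp b + 1) / 2 < Real.exp b := by linarith
  have hlogpos : 0 < Real.log ((Real.exp b + 1) / 2) := Real.log_pos hM1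
  have hlogb : Real.log ((Real.exp b + 1) / 2) < b := by
    have := Real.log_lt_log hM hMb
    rwa [Real.log_exp] at this
  have hδpos : 0 < δ := by linarith
  have hbδ : 0 < b - δ := by linarith
  have h1e : 1 < Real.exp (b - δ) := one_lt_exp_of_pos hbδ
  refine ⟨div_pos (by linarith) hC, ?_, hδpos⟩
  have hexp : Real.exp (b - δ) < (Real.exp b + 1) / 2 := by
    have h := Real.exp_lt_exp.mpr (show b - δ < Real.log ((Real.exp b + 1) / 2) by linarith)
    rwa [Real.exp_log hM] at h
  rw [div_lt_iff₀ hC]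
  linarith

lemma key (σ b : ℝ) (hσ : 0 < σ) (hb : 0 < b) :
    StrictMonoOn
      (fun δ => σ * (Real.exp b - Real.exp (b - δ)) /
        ((Real.exp b - 1) *
          stdPdf (stdCdfInv ((Real.exp (b - δ) - 1) / (Real.exp b - 1)))))
      (Set.Ioo (b - Real.log ((Real.exp b + 1) / 2)) b) := by
  intro δ₁ h₁ δ₂ h₂ h12
  obtain ⟨hx1pos, hx1half, hδ1pos⟩ := interval_facts hb h₁
  obtain ⟨hx2pos, hx2half, hδ2pos⟩ := interval_facts hb h₂
  have he : 1 < Real.exp b := one_lt_exp_of_pos hb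
  have hC : 0 < Real.exp b - 1 := by linarith
  set x₁ := (Real.exp (b - δ₁) - 1) / (Real.exp b - 1) with hx1
  set x₂ := (Real.exp (b - δ₂) - 1) / (Real.exp b - 1) with hx2
  have hxlt : x₂ < x₁ := by
    rw [hx1, hx2, div_lt_div_iff_of_pos_right hC]
    exact sub_lt_sub_right (Real.exp_lt_exp.mpr (by linarith)) 1
  have hg2lt : stdCdfInv x₂ < stdCdfInv x₁ := stdCdfInv_lt hx2pos hxlt (by linarith)
  have hg1neg : stdCdfInv x₁ < 0 := stdCdfInv_neg hx1pos hx1half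
  have hp1 : 0 < stdPdf (stdCdfInv x₁) := stdPdf_pos _
  have hp2 : 0 < stdPdf (stdCdfInv x₂) := stdPdf_pos _
  have hplt : stdPdf (stdCdfInv x₂) < stdPdf (stdCdfInv x₁) :=
    stdPdf_lt_of_neg hg2lt hg1neg.le
  have ha1 : 0 < σ * (Real.exp b - Real.exp (b - δ₁)) := by
    apply mul_pos hσ
    have : Real.exp (b - δ₁) < Real.exp b := Real.exp_lt_exp.mpr (by linarith)
    linarith
  have halt : σ * (Real.exp b - Real.exp (b - δ₁)) < σ * (Real.exp b - Real.exp (b - δ₂)) := by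
    apply mul_lt_mul_of_pos_left _ hσ
    have : Real.exp (b - δ₂) < Real.exp (b - δ₁) := Real.exp_lt_exp.mpr (by linarith)
    linarith
  show σ * (Real.exp b - Real.exp (b - δ₁)) / ((Real.exp b - 1) * stdPdf (stdCdfInv x₁))
      < σ * (Real.exp b - Real.exp (b - δ₂)) / ((Real.exp b - 1) * stdPdf (stdCdfInv x₂))
  rw [div_lt_div_iff₀ (by positivity) (by positivity)]
  nlinarith [mul_pos hC hp2, mul_pos hC hp1,
    mul_lt_mul_of_pos_left hplt (mul_pos (ha1.trans halt) hC)]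

end Aux

noncomputable def d1 (N F σ δ : ℝ) : ℝ := (Real.log (N / (F * Real.exp δ)) + σ ^ 2 / 2) / σ

noncomputable def d2 (N F σ δ : ℝ) : ℝ := d1 N F σ δ - σ

/-- Expected collateral shortfall P(F, δ). -/
noncomputable def Pshort (N σ F δ : ℝ) : ℝ :=
  F * Real.exp δ * stdCdf (-(d2 N F σ δ)) - N * stdCdf (-(d1 N F σ δ))

/-- Vault payoff V(F, δ). -/
noncomputable def Vval (N σ b F δ : ℝ) : ℝ :=
  N * Real.exp (σ ^ 2 / 2) + F * (Real.exp b - Real.exp δ)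
    - Pshort N σ F δ * (Real.exp b - 1)

/-- Unconstrained optimal issuance φ(δ). -/
noncomputable def phiIss (N σ b δ : ℝ) : ℝ :=
  N * Real.exp (σ * stdCdfInv ((Real.exp (b - δ) - 1) / (Real.exp b - 1)) - δ - σ ^ 2 / 2)

theorem stmt13 (σ b : ℝ) (hσ : 0 < σ) (hb : 0 < b) (N : ℝ) (hN : 0 < N) :
    StrictMonoOn
      (fun δ => σ * (Real.exp b - Real.exp (b - δ)) /
        ((Real.exp b - 1) *
          stdPdf (stdCdfInv ((Real.exp (b - δ) - 1) / (Real.exp b - 1)))))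
      (Set.Ioo (b - Real.log ((Real.exp b + 1) / 2)) b) ∧
    ∀ δ₁ ∈ Set.Ioo (b - Real.log ((Real.exp b + 1) / 2)) b,
      ∀ δ₂ ∈ Set.Ioo (b - Real.log ((Real.exp b + 1) / 2)) b, δ₁ < δ₂ →
        phiIss N σ b δ₁ *
          (1 - σ * (Real.exp b - Real.exp (b - δ₁)) /
            ((Real.exp b - 1) *
              stdPdf (stdCdfInv ((Real.exp (b - δ₁) - 1) / (Real.exp b - 1))))) ≤ 0 →
        phiIss N σ b δ₂ *
          (1 - σ * (Real.exp b - Real.exp (b - δ₂)) /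
            ((Real.exp b - 1) *
              stdPdf (stdCdfInv ((Real.exp (b - δ₂) - 1) / (Real.exp b - 1))))) < 0 := by
  
  constructor
  · exact key σ b hσ hb
  · intro δ₁ h₁ δ₂ h₂ h12 hle
    have hmono := key σ b hσ hb h₁ h₂ h12
    dsimp only at hmono
    have hφ1 : 0 < phiIss N σ b δ₁ := by unfold phiIss; positivity
    have hφ2 : 0 < phiIss N σ b δ₂ := by unfold phiIss; positivity
    have h1 : 1 - σ * (Real.exp b - Real.exp (b - δ₁)) /
        ((Real.exp b - 1) *
          stdPdf (stdCdfInv ((Real.exp (b - δ₁) - 1) / (Real.exp b - 1)))) ≤ 0 := by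
      by_contra h
      exact absurd (mul_pos hφ1 (lt_of_not_ge h)) (not_lt.mpr hle)
    exact mul_neg_of_pos_of_neg hφ2 (by linarith)
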